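/- Let α₁: ℂ⁵ → M₄(ℂ) send (x₁,…,x₅) to the matrix with rows (−(3/8)x₅,0,0,0), (x₁,−(1/2)x₁−(3/8)x₅,0,x₄), (x₂,0,(5/8)x₅,x₃), (x₃,−(1/2)x₃,0,(1/8)x₅+(1/2)x₁), and let κ(x,y) = (3/2)(x₃y₁−x₁y₃)E₃₄. Define S⁰ = {v ∈ ℂ⁴ : κ(x,y)v = 0 ∀x,y} and Sᵏ = {v ∈ Sᵏ⁻¹ : α₁(x)v ∈ Sᵏ⁻¹ ∀x}. Then S⁰ = {v : v₄ = 0}, S¹ = {(z₁, 2z₁, z₃, 0) : z₁,z₃ ∈ ℂ}, and Sᵏ = S¹ for all k ≥ 1. -/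

import Mathlib

open Matrix

noncomputable section

/-- The extension α₁ of the homogeneous C-projective structure. -/
def αC1 (x : Fin 5 → ℂ) : Matrix (Fin 4) (Fin 4) ℂ :=
  !![-(3/8) * x 4, 0, 0, 0;
     x 0, -(1/2) * x 0 - (3/8) * x 4, 0, x 3;
     x 1, 0, (5/8) * x 4, x 2;
     x 2, -(1/2) * x 2, 0, (1/8) * x 4 + (1/2) * x 0]

/-- The curvature κ(x,y) = (3/2)(x₃y₁ − x₁y₃)E₃₄. -/
def κC (x y : Fin 5 → ℂ) : Matrix (Fin 4) (Fin 4) ℂ :=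
  ((3/2) * (x 2 * y 0 - x 0 * y 2)) • Matrix.single (2 : Fin 4) (3 : Fin 4) (1 : ℂ)

/-- The sets S⁰ ⊇ S¹ ⊇ S² ⊇ ⋯ computing the solution space. -/
def S17 : ℕ → Set (Fin 4 → ℂ)
  | 0 => {v | ∀ x y : Fin 5 → ℂ, (κC x y).mulVec v = 0}
  | (k + 1) => {v | v ∈ S17 k ∧ ∀ x : Fin 5 → ℂ, (αC1 x).mulVec v ∈ S17 k}

lemma hS0 : S17 0 = {v | v 3 = 0} := by
  ext v
  constructor
  · intro h
    have := congrFun (h ![0,0,1,0,0] ![1,0,0,0,0]) 2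
    simp [κC, Matrix.mulVec, dotProduct, Fin.sum_univ_four,
      Matrix.single] at this
    simpa using this
  · intro h x y
    funext i
    fin_cases i <;>
      simp_all [κC, Matrix.mulVec, dotProduct, Fin.sum_univ_four,
        Matrix.single]

lemma hS1 : S17 1 = {v | v 1 = 2 * v 0 ∧ v 3 = 0} := by
  have h01 : S17 1 = {v | v ∈ S17 0 ∧ ∀ x : Fin 5 → ℂ, (αC1 x).mulVec v ∈ S17 0} := rfl
  rw [h01, hS0]
  ext v
  simp only [Set.mem_setOf_eq]
  constructor
  · rintro ⟨h3, hα⟩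
    refine ⟨?_, h3⟩
    have := hα ![0,0,1,0,0]
    simp only [Set.mem_setOf_eq, αC1, Matrix.mulVec, dotProduct,
      Fin.sum_univ_four] at this
    simp [Matrix.vecHead, Matrix.vecTail, h3] at this
    linear_combination (-2:ℂ) * this
  · rintro ⟨h1, h3⟩
    refine ⟨h3, fun x => ?_⟩
    simp only [Set.mem_setOf_eq, αC1, Matrix.mulVec, dotProduct,
      Fin.sum_univ_four]
    simp [h1, h3]
    ring

lemma hstep (v : Fin 4 → ℂ) (hv : v ∈ S17 1) (x : Fin 5 → ℂ) :
    (αC1 x).mulVec v ∈ S17 1 := by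
  rw [hS1] at hv ⊢
  obtain ⟨h1, h3⟩ := hv
  constructor <;>
    · simp [αC1, Matrix.mulVec, dotProduct, Fin.sum_univ_four, h1, h3]
      ring

theorem stmt17 :
    S17 0 = {v | v 3 = 0} ∧
    S17 1 = {v | v 1 = 2 * v 0 ∧ v 3 = 0} ∧
    (∀ k : ℕ, 1 ≤ k → S17 k = S17 1) := by
  refine ⟨hS0, hS1, ?_⟩
  intro k hk
  induction k with
  | zero => omega
  | succ n ih =>
    rcases Nat.eq_zero_or_pos n with h0 | hn
    · subst h0; rfl
    · have ihn := ih hn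
      have h01 : S17 (n+1) = {v | v ∈ S17 n ∧ ∀ x : Fin 5 → ℂ, (αC1 x).mulVec v ∈ S17 n} := rfl
      rw [h01, ihn]
      ext v
      simp only [Set.mem_setOf_eq]
      exact ⟨fun h => h.1, fun h => ⟨h, fun x => hstep v h x⟩⟩
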